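/- arXiv:1005.4947 — 3 statements merged into one kernel-verified Lean document; each statement's English description precedes it below -/
import Mathlib

section
/- For every nonnegative integer m and every real number u with u > 0 and u ≠ 1, the improper integral ∫₀^∞ xᵐ / ((x+1)^(m+1) (xu+1)) dx converges and equals (-1)^m (u-1)^(-(m+1)) ( log u - ∑_{j=1}^{m} (-1)^(j+1) (u-1)^j / j ). -/
open MeasureTheory Set

/-- The modified logarithm `𝓛ₘ(u)`. -/
noncomputable def modifiedLog (m : ℕ) (u : ℝ) : ℝ :=
  (-1) ^ m * (u - 1) ^ (-(m + 1 : ℤ)) *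
    (Real.log u - ∑ j ∈ Finset.Icc 1 m, (-1) ^ (j + 1) * (u - 1) ^ j / j)

lemma key_ident (m : ℕ) {u x : ℝ} (hu : 0 < u) (hu1 : u ≠ 1) (hx : 0 < x) :
    (-1:ℝ)^m * (u-1)^(-(m+1):ℤ) *
      ((u/(x*u+1) - 1/(x+1)) -
        ∑ j ∈ Finset.Icc 1 m, (-1:ℝ)^(j+1) * ((u-1)*x/(x+1))^(j-1) * ((u-1)/(x+1)^2))
      = x^m/((x+1)^(m+1)*(x*u+1)) := by
  have hs : (0:ℝ) < x + 1 := by linarith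
  have hv : (0:ℝ) < x*u + 1 := by positivity
  have hu1' : u - 1 ≠ 0 := sub_ne_zero.mpr hu1
  have hsum : ∑ j ∈ Finset.Icc 1 m, (-1:ℝ)^(j+1) * ((u-1)*x/(x+1))^(j-1) * ((u-1)/(x+1)^2)
      = ((u-1)/(x+1)^2) * ∑ i ∈ Finset.range m, (-((u-1)*x/(x+1)))^i := by
    rw [← Finset.Ico_add_one_right_eq_Icc, Finset.sum_Ico_eq_sum_range, Finset.mul_sum]
    refine Finset.sum_congr rfl fun i _ => ?_
    rw [show (-((u-1)*x/(x+1)))^i = (-1:ℝ)^i * ((u-1)*x/(x+1))^i from neg_pow _ _,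
      show 1 + i - 1 = i from by omega]
    ring
  rw [hsum]
  have hkey : (1:ℝ) + (u-1)*x/(x+1) = (x*u+1)/(x+1) := by field_simp; ring
  have hne : -((u-1)*x/(x+1)) ≠ 1 := by
    intro H
    have h0 : (1:ℝ) + (u-1)*x/(x+1) = 0 := by linarith
    rw [hkey] at h0
    exact absurd h0 (by positivity)
  rw [geom_sum_eq hne m]
  have hne2 : -((u-1)*x/(x+1)) - 1 ≠ 0 := sub_ne_zero.mpr hne
  have hzpow : (u-1)^(-(m+1):ℤ) = ((u-1)^(m+1))⁻¹ := by
    rw [show (-(m+1:ℤ)) = -((m+1 : ℕ) : ℤ) by push_cast; ring, zpow_neg, zpow_natCast]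
  rw [hzpow]
  have hbr : ((u/(x*u+1) - 1/(x+1)) -
        (u-1)/(x+1)^2 * (((-((u-1)*x/(x+1)))^m - 1)/(-((u-1)*x/(x+1)) - 1)))
      = (-1)^m * (u-1)^(m+1) * (x^m/((x+1)^(m+1)*(x*u+1))) := by
    have hd : -((u-1)*x/(x+1)) - 1 = -((x*u+1)/(x+1)) := by
      field_simp
      ring
    rw [hd, show (-((u-1)*x/(x+1)))^m = (-1:ℝ)^m * ((u-1)^m * x^m)/(x+1)^m from by
      rw [neg_pow, div_pow, mul_pow]; ring]
    rw [div_neg, div_div_eq_mul_div]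
    field_simp [hs.ne', hv.ne']
    ring
  rw [hbr]
  have h1 : (-1:ℝ)^m * (-1:ℝ)^m = 1 := by
    rw [← pow_add, ← two_mul, pow_mul]; norm_num
  have h2 : ((u-1)^(m+1))⁻¹ * (u-1)^(m+1) = 1 :=
    inv_mul_cancel₀ (pow_ne_zero _ hu1')
  calc (-1:ℝ)^m * ((u-1)^(m+1))⁻¹ * ((-1)^m * (u-1)^(m+1) * (x^m/((x+1)^(m+1)*(x*u+1))))
      = ((-1:ℝ)^m * (-1)^m) * (((u-1)^(m+1))⁻¹ * (u-1)^(m+1)) * (x^m/((x+1)^(m+1)*(x*u+1))) := by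
        ring
    _ = x^m/((x+1)^(m+1)*(x*u+1)) := by rw [h1, h2]; ring

/-- The integral representation `𝓛ₘ(u) = ∫₀^∞ xᵐ/((x+1)^(m+1)(xu+1)) dx` for `u > 0`, `u ≠ 1`. -/
theorem modifiedLog_integral_rep (m : ℕ) (u : ℝ) (hu : 0 < u) (hu1 : u ≠ 1) :
    IntegrableOn (fun x : ℝ => x ^ m / ((x + 1) ^ (m + 1) * (x * u + 1))) (Ioi 0) ∧
    ∫ x in Ioi (0 : ℝ), x ^ m / ((x + 1) ^ (m + 1) * (x * u + 1)) = modifiedLog m u := by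
  set c : ℝ := (-1:ℝ)^m * (u-1)^(-(m+1):ℤ) with hc
  set g : ℝ → ℝ := fun x => c * ((Real.log (x*u+1) - Real.log (x+1)) -
      ∑ j ∈ Finset.Icc 1 m, (-1:ℝ)^(j+1) * ((u-1)*x/(x+1))^j / j) with hg
  -- derivative of g at every x ≥ 0
  have hderiv : ∀ x : ℝ, 0 ≤ x → HasDerivAt g
      (c * ((u/(x*u+1) - 1/(x+1)) -
        ∑ j ∈ Finset.Icc 1 m, (-1:ℝ)^(j+1) * ((u-1)*x/(x+1))^(j-1) * ((u-1)/(x+1)^2))) x := by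
    intro x hx
    have hs : (0:ℝ) < x + 1 := by linarith
    have hv : (0:ℝ) < x*u + 1 := by positivity
    have hlog1 : HasDerivAt (fun y : ℝ => Real.log (y*u+1)) (u/(x*u+1)) x := by
      have := (((hasDerivAt_id x).mul_const u).add_const 1).log hv.ne'
      simpa using this
    have hlog2 : HasDerivAt (fun y : ℝ => Real.log (y+1)) (1/(x+1)) x := by
      have := ((hasDerivAt_id x).add_const 1).log hs.ne'
      simpa using this
    have hsum : HasDerivAt (fun y : ℝ => ∑ j ∈ Finset.Icc 1 m,
          (-1:ℝ)^(j+1) * ((u-1)*y/(y+1))^j / j)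
        (∑ j ∈ Finset.Icc 1 m,
          (-1:ℝ)^(j+1) * ((u-1)*x/(x+1))^(j-1) * ((u-1)/(x+1)^2)) x := by
      apply HasDerivAt.fun_sum
      intro j hj
      have hj1 : 1 ≤ j := (Finset.mem_Icc.mp hj).1
      have hjne : (j:ℝ) ≠ 0 := by positivity
      have hh : HasDerivAt (fun y : ℝ => (u-1)*y/(y+1)) ((u-1)/(x+1)^2) x := by
        have := ((hasDerivAt_id' x).const_mul (u-1)).fun_div ((hasDerivAt_id' x).add_const 1) hs.ne'
        refine this.congr_deriv ?_
        field_simp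
        ring
      have hpow := hh.fun_pow j
      have := (hpow.const_mul ((-1:ℝ)^(j+1))).div_const (j:ℝ)
      refine this.congr_deriv ?_
      field_simp
    exact ((hlog1.sub hlog2).sub hsum).const_mul c
  have hderiv' : ∀ x ∈ Ioi (0:ℝ), HasDerivAt g
      (x ^ m / ((x + 1) ^ (m + 1) * (x * u + 1))) x := by
    intro x hx
    have := hderiv x (le_of_lt hx)
    rwa [hc, key_ident m hu hu1 hx] at this
  have hcont : ContinuousWithinAt g (Ici (0:ℝ)) 0 :=
    (hderiv 0 le_rfl).continuousAt.continuousWithinAt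
  have hnonneg : ∀ x ∈ Ioi (0:ℝ), 0 ≤ x ^ m / ((x + 1) ^ (m + 1) * (x * u + 1)) := by
    intro x hx
    have hx' : (0:ℝ) < x := hx
    positivity
  -- limit at infinity
  have hL : Filter.Tendsto (fun x : ℝ => Real.log (x*u+1) - Real.log (x+1))
      Filter.atTop (nhds (Real.log u)) := by
    have h1 : Filter.Tendsto (fun x : ℝ => x + 1) Filter.atTop Filter.atTop :=
      Filter.tendsto_atTop_add_const_right _ 1 Filter.tendsto_id
    have h2 : Filter.Tendsto (fun x : ℝ => (1-u)/(x+1)) Filter.atTop (nhds 0) :=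
      Filter.Tendsto.div_atTop tendsto_const_nhds h1
    have h3 : Filter.Tendsto (fun x : ℝ => u + (1-u)/(x+1)) Filter.atTop (nhds u) := by
      simpa using tendsto_const_nhds.add h2
    have h4 : Filter.Tendsto (fun x : ℝ => Real.log (u + (1-u)/(x+1)))
        Filter.atTop (nhds (Real.log u)) :=
      ((Real.continuousAt_log hu.ne').tendsto.comp h3)
    apply h4.congr'
    filter_upwards [Filter.eventually_gt_atTop (0:ℝ)] with x hx
    have hs : (0:ℝ) < x + 1 := by linarith
    have hv : (0:ℝ) < x*u + 1 := by positivity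
    rw [show u + (1-u)/(x+1) = (x*u+1)/(x+1) from by field_simp; ring,
      Real.log_div hv.ne' hs.ne']
  have hbase : Filter.Tendsto (fun x : ℝ => (u-1)*x/(x+1)) Filter.atTop (nhds (u-1)) := by
    have h1 : Filter.Tendsto (fun x : ℝ => x + 1) Filter.atTop Filter.atTop :=
      Filter.tendsto_atTop_add_const_right _ 1 Filter.tendsto_id
    have h2 : Filter.Tendsto (fun x : ℝ => (u-1)/(x+1)) Filter.atTop (nhds 0) :=
      Filter.Tendsto.div_atTop tendsto_const_nhds h1
    have h3 : Filter.Tendsto (fun x : ℝ => (u-1) - (u-1)/(x+1)) Filter.atTop (nhds (u-1)) := by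
      simpa using tendsto_const_nhds.sub h2
    apply h3.congr'
    filter_upwards [Filter.eventually_gt_atTop (0:ℝ)] with x hx
    have hs : (0:ℝ) < x + 1 := by linarith
    field_simp
    ring
  have hS : Filter.Tendsto (fun x : ℝ => ∑ j ∈ Finset.Icc 1 m,
        (-1:ℝ)^(j+1) * ((u-1)*x/(x+1))^j / j)
      Filter.atTop (nhds (∑ j ∈ Finset.Icc 1 m, (-1:ℝ)^(j+1) * (u-1)^j / j)) := by
    apply tendsto_finset_sum
    intro j _
    exact ((hbase.pow j).const_mul ((-1:ℝ)^(j+1))).div_const (j:ℝ)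
  have ht : Filter.Tendsto g Filter.atTop (nhds (modifiedLog m u)) := by
    have := (hL.sub hS).const_mul c
    convert this using 2
    rfl
  have hg0 : g 0 = 0 := by
    simp only [hg]
    simp
    right
    apply Finset.sum_eq_zero
    intro j hj
    have hj1 : 1 ≤ j := (Finset.mem_Icc.mp hj).1
    have : j ≠ 0 := by omega
    simp [zero_pow this]
  refine ⟨integrableOn_Ioi_deriv_of_nonneg hcont hderiv' hnonneg ht, ?_⟩
  rw [integral_Ioi_of_hasDerivAt_of_nonneg hcont hderiv' hnonneg ht, hg0, sub_zero]
end

section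
/- For every nonnegative integer m and all real numbers k > 0 and λ > 0 with λ ≠ 1, one has ∫₀^∞ k^(2m+2) uᵐ / ((k²u+1)^(m+1) (λk²u+1)) du = 𝓛_m(λ). -/
open MeasureTheory Set Filter Topology

lemma modifiedLog_eq (m : ℕ) (u : ℝ) :
    modifiedLog m u = (-1) ^ m * ((u - 1) ^ (m + 1))⁻¹ *
      (Real.log u - ∑ j ∈ Finset.Icc 1 m, (-1) ^ (j + 1) * (u - 1) ^ j / j) := by
  rw [modifiedLog, show (-(m + 1 : ℤ)) = -((m + 1 : ℕ) : ℤ) by push_cast; ring,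
    zpow_neg, zpow_natCast]

lemma neg_one_pow_mul_succ (m : ℕ) : ((-1:ℝ)) ^ m * (-1) ^ (m + 1) = -1 := by
  rw [← pow_add]
  exact Odd.neg_one_pow ⟨m, by ring⟩

lemma modifiedLog_eq' (m : ℕ) (u : ℝ) :
    modifiedLog m u = -(((1 - u) ^ (m + 1))⁻¹) *
      (Real.log u + ∑ j ∈ Finset.Icc 1 m, (1 - u) ^ j / j) := by
  rw [modifiedLog_eq, show u - 1 = -(1 - u) by ring, neg_pow (1 - u) (m + 1)]
  have hs : ∑ j ∈ Finset.Icc 1 m, ((-1:ℝ)) ^ (j + 1) * (-(1 - u)) ^ j / j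
      = -∑ j ∈ Finset.Icc 1 m, (1 - u) ^ j / (j : ℝ) := by
    rw [← Finset.sum_neg_distrib]
    refine Finset.sum_congr rfl fun j _ => ?_
    rw [neg_pow (1 - u) j,
      show ((-1:ℝ)) ^ (j + 1) * (((-1:ℝ)) ^ j * (1 - u) ^ j) / j
        = (((-1:ℝ)) ^ (j + 1) * ((-1:ℝ)) ^ j) * (1 - u) ^ j / j by ring,
      ← pow_add, Odd.neg_one_pow ⟨j, by ring⟩]
    ring
  rw [hs, sub_neg_eq_add, mul_inv, ← inv_pow, inv_neg, inv_one, ← mul_assoc,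
    neg_one_pow_mul_succ, neg_one_mul]

/-- Beta-type integral: `∫₀^∞ tᵐ/(t+1)^(m+2) dt = 1/(m+1)`, with integrability. -/
lemma beta_aux (m : ℕ) :
    IntegrableOn (fun t : ℝ => t ^ m / (t + 1) ^ (m + 2)) (Ioi 0) ∧
    ∫ t in Ioi (0:ℝ), t ^ m / (t + 1) ^ (m + 2) = ((m : ℝ) + 1)⁻¹ := by
  set G : ℝ → ℝ := fun t => ((m : ℝ) + 1)⁻¹ * (t / (t + 1)) ^ (m + 1) with hG
  have hderiv : ∀ x ∈ Ici (0:ℝ), HasDerivAt G (x ^ m / (x + 1) ^ (m + 2)) x := by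
    intro x hx
    have hx1 : (0:ℝ) < x + 1 := by simp only [mem_Ici] at hx; linarith
    have hq : HasDerivAt (fun t : ℝ => t / (t + 1))
        ((1 * (x + 1) - x * 1) / (x + 1) ^ 2) x :=
      (hasDerivAt_id x).div ((hasDerivAt_id x).add_const 1) hx1.ne'
    have := ((hq.pow (m + 1)).const_mul ((m : ℝ) + 1)⁻¹)
    refine this.congr_deriv ?_
    symm
    have hm : ((m : ℝ) + 1) ≠ 0 := by positivity
    simp only [Nat.add_sub_cancel]
    push_cast
    rw [div_pow, eq_comm]
    field_simp
    ring
  have hpos : ∀ x ∈ Ioi (0:ℝ), 0 ≤ x ^ m / (x + 1) ^ (m + 2) := by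
    intro x hx
    have : (0:ℝ) < x := hx
    positivity
  have htend : Tendsto G atTop (𝓝 (((m : ℝ) + 1)⁻¹)) := by
    have h1 : Tendsto (fun t : ℝ => t + 1) atTop atTop :=
      tendsto_atTop_add_const_right _ 1 tendsto_id
    have h2 : Tendsto (fun t : ℝ => 1 - (t + 1)⁻¹) atTop (𝓝 (1 - 0)) :=
      tendsto_const_nhds.sub h1.inv_tendsto_atTop
    have h3 : Tendsto (fun t : ℝ => t / (t + 1)) atTop (𝓝 1) := by
      rw [show (1:ℝ) = 1 - 0 by ring]
      refine h2.congr' ?_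
      filter_upwards [eventually_ge_atTop (0:ℝ)] with t ht
      have : t + 1 ≠ 0 := by linarith
      field_simp
      ring
    have h4 := (h3.pow (m + 1)).const_mul ((m : ℝ) + 1)⁻¹
    simpa using h4
  have hG0 : G 0 = 0 := by simp [hG]
  constructor
  · exact integrableOn_Ioi_deriv_of_nonneg' hderiv hpos htend
  · rw [integral_Ioi_of_hasDerivAt_of_nonneg' hderiv hpos htend, hG0, sub_zero]

/-- Base case: `∫₀^∞ 1/((t+1)(λt+1)) dt = log λ/(λ-1)`, with integrability. -/
lemma base_aux {lam : ℝ} (hlam : 0 < lam) (hlam1 : lam ≠ 1) :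
    IntegrableOn (fun t : ℝ => t ^ 0 / ((t + 1) ^ (0 + 1) * (lam * t + 1))) (Ioi 0) ∧
    ∫ t in Ioi (0:ℝ), t ^ 0 / ((t + 1) ^ (0 + 1) * (lam * t + 1)) =
      (lam - 1)⁻¹ * Real.log lam := by
  set F : ℝ → ℝ := fun t => (lam - 1)⁻¹ * (Real.log (lam * t + 1) - Real.log (t + 1)) with hF
  have hderiv : ∀ x ∈ Ici (0:ℝ), HasDerivAt F (x ^ 0 / ((x + 1) ^ (0 + 1) * (lam * x + 1))) x := by
    intro x hx
    have hx0 : (0:ℝ) ≤ x := hx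
    have hx1 : (0:ℝ) < x + 1 := by linarith
    have hx2 : (0:ℝ) < lam * x + 1 := by nlinarith
    have h1 : HasDerivAt (fun t : ℝ => lam * t + 1) lam x := by
      simpa using ((hasDerivAt_id x).const_mul lam).add_const 1
    have h2 : HasDerivAt (fun t : ℝ => Real.log (lam * t + 1)) ((lam * x + 1)⁻¹ * lam) x :=
      (Real.hasDerivAt_log hx2.ne').comp x h1 (h₂ := Real.log)
    have h3 : HasDerivAt (fun t : ℝ => t + 1) 1 x := (hasDerivAt_id x).add_const 1
    have h4 : HasDerivAt (fun t : ℝ => Real.log (t + 1)) ((x + 1)⁻¹ * 1) x :=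
      (Real.hasDerivAt_log hx1.ne').comp x h3 (h₂ := Real.log)
    have := (h2.sub h4).const_mul (lam - 1)⁻¹
    refine this.congr_deriv ?_
    symm
    have hd : lam - 1 ≠ 0 := sub_ne_zero.mpr hlam1
    field_simp
    ring
  have hpos : ∀ x ∈ Ioi (0:ℝ), 0 ≤ x ^ 0 / ((x + 1) ^ (0 + 1) * (lam * x + 1)) := by
    intro x hx
    have hx0 : (0:ℝ) < x := hx
    have hx2 : (0:ℝ) < lam * x + 1 := by nlinarith
    positivity
  have htend : Tendsto F atTop (𝓝 ((lam - 1)⁻¹ * Real.log lam)) := by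
    have h1 : Tendsto (fun t : ℝ => t + 1) atTop atTop :=
      tendsto_atTop_add_const_right _ 1 tendsto_id
    have h2 : Tendsto (fun t : ℝ => lam + (1 - lam) * (t + 1)⁻¹) atTop (𝓝 (lam + (1 - lam) * 0)) :=
      tendsto_const_nhds.add (tendsto_const_nhds.mul h1.inv_tendsto_atTop)
    have h3 : Tendsto (fun t : ℝ => (lam * t + 1) / (t + 1)) atTop (𝓝 lam) := by
      rw [show lam = lam + (1 - lam) * 0 by ring]
      refine h2.congr' ?_
      filter_upwards [eventually_ge_atTop (0:ℝ)] with t ht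
      have : t + 1 ≠ 0 := by linarith
      field_simp
      ring
    have h4 : Tendsto (fun t : ℝ => (lam - 1)⁻¹ * Real.log ((lam * t + 1) / (t + 1)))
        atTop (𝓝 ((lam - 1)⁻¹ * Real.log lam)) :=
      (((Real.continuousAt_log hlam.ne').tendsto.comp h3).const_mul _)
    refine h4.congr' ?_
    filter_upwards [eventually_ge_atTop (0:ℝ)] with t ht
    have hx1 : (0:ℝ) < t + 1 := by linarith
    have hx2 : (0:ℝ) < lam * t + 1 := by nlinarith
    rw [hF]
    rw [Real.log_div hx2.ne' hx1.ne']
  have hF0 : F 0 = 0 := by simp [hF]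
  constructor
  · exact integrableOn_Ioi_deriv_of_nonneg' hderiv hpos htend
  · rw [integral_Ioi_of_hasDerivAt_of_nonneg' hderiv hpos htend, hF0, sub_zero]

lemma key_aux (m : ℕ) {lam : ℝ} (hlam : 0 < lam) (hlam1 : lam ≠ 1) :
    IntegrableOn (fun t : ℝ => t ^ m / ((t + 1) ^ (m + 1) * (lam * t + 1))) (Ioi 0) ∧
    ∫ t in Ioi (0:ℝ), t ^ m / ((t + 1) ^ (m + 1) * (lam * t + 1)) = modifiedLog m lam := by
  have hd : lam - 1 ≠ 0 := sub_ne_zero.mpr hlam1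
  induction m with
  | zero =>
    refine ⟨(base_aux hlam hlam1).1, ?_⟩
    rw [(base_aux hlam hlam1).2, modifiedLog_eq',
      Finset.Icc_eq_empty (by omega : ¬ (1:ℕ) ≤ 0), Finset.sum_empty, add_zero, pow_one,
      show (1:ℝ) - lam = -(lam - 1) by ring, inv_neg, neg_neg]
  | succ m ih =>
    obtain ⟨hint, hval⟩ := ih
    obtain ⟨hbint, hbval⟩ := beta_aux m
    have heq : EqOn (fun t : ℝ => t ^ (m + 1) / ((t + 1) ^ (m + 1 + 1) * (lam * t + 1)))
        (fun t : ℝ => (lam - 1)⁻¹ *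
          (t ^ m / (t + 1) ^ (m + 2) - t ^ m / ((t + 1) ^ (m + 1) * (lam * t + 1)))) (Ioi 0) := by
      intro t ht
      have ht0 : (0:ℝ) < t := ht
      have hx1 : (0:ℝ) < t + 1 := by linarith
      have hx2 : (0:ℝ) < lam * t + 1 := by nlinarith
      field_simp
      ring
    have hcomb : IntegrableOn (fun t : ℝ => (lam - 1)⁻¹ *
        (t ^ m / (t + 1) ^ (m + 2) - t ^ m / ((t + 1) ^ (m + 1) * (lam * t + 1)))) (Ioi 0) :=
      (hbint.sub hint).const_mul _
    have hint' : IntegrableOn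
        (fun t : ℝ => t ^ (m + 1) / ((t + 1) ^ (m + 1 + 1) * (lam * t + 1))) (Ioi 0) :=
      MeasureTheory.IntegrableOn.congr_fun hcomb heq.symm measurableSet_Ioi
    refine ⟨hint', ?_⟩
    rw [setIntegral_congr_fun measurableSet_Ioi heq, integral_const_mul,
      integral_sub hbint hint, hbval, hval]
    rw [modifiedLog_eq', modifiedLog_eq']
    rw [Finset.sum_Icc_succ_top (by omega : 1 ≤ m + 1)]
    have hd' : (1:ℝ) - lam ≠ 0 := sub_ne_zero.mpr (Ne.symm hlam1)
    have h1 : ((1 - lam) ^ (m + 1)) ≠ 0 := pow_ne_zero _ hd'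
    have h2 : ((1 - lam) ^ (m + 1 + 1)) ≠ 0 := pow_ne_zero _ hd'
    have h3 : ((m : ℝ) + 1) ≠ 0 := by positivity
    push_cast
    field_simp
    ring

/-- The scalar form of the Connes–Tretkoff integration lemma:
`∫₀^∞ k^(2m+2) uᵐ / ((k²u+1)^(m+1)(λk²u+1)) du = 𝓛ₘ(λ)`. -/
theorem connes_tretkoff_scalar_integral (m : ℕ) (k lam : ℝ) (hk : 0 < k)
    (hlam : 0 < lam) (hlam1 : lam ≠ 1) :
    ∫ u in Ioi (0 : ℝ),
      k ^ (2 * m + 2) * u ^ m / ((k ^ 2 * u + 1) ^ (m + 1) * (lam * k ^ 2 * u + 1)) =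
      modifiedLog m lam := by
  have hk2 : (0:ℝ) < k ^ 2 := by positivity
  have h1 : ∀ u : ℝ, k ^ (2 * m + 2) * u ^ m / ((k ^ 2 * u + 1) ^ (m + 1) * (lam * k ^ 2 * u + 1))
      = (fun t : ℝ => k ^ 2 * (t ^ m / ((t + 1) ^ (m + 1) * (lam * t + 1)))) (k ^ 2 * u) := by
    intro u
    simp only
    rw [mul_div_assoc']
    congr 1
    · rw [mul_pow, ← pow_mul]; ring
    · ring
  simp_rw [h1]
  rw [MeasureTheory.integral_comp_mul_left_Ioi
    (fun t : ℝ => k ^ 2 * (t ^ m / ((t + 1) ^ (m + 1) * (lam * t + 1)))) 0 hk2,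
    mul_zero, integral_const_mul, smul_eq_mul, ← mul_assoc, inv_mul_cancel₀ hk2.ne', one_mul]
  exact (key_aux m hlam hlam1).2
end

section
/- There exists a real-analytic function H on ℝ such that H(x) = h(x) for every real x ≠ 0; that is, the singularity of h at x = 0 is removable and h extends to a real-analytic function on all of ℝ. -/
/-- The function `h`. -/
noncomputable def hCT (x : ℝ) : ℝ :=
  -(Real.exp (-x / 2) *
      (-1 + 3 * Real.exp (x / 2) + 3 * Real.exp x + 6 * Real.exp (3 * x / 2) * x
        - 3 * Real.exp (2 * x) - 3 * Real.exp (5 * x / 2) + Real.exp (3 * x))) /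
    (6 * (Real.exp (x / 2) - 1) ^ 4 * (Real.exp (x / 2) + 1) ^ 2)

open Function Real

/-- The odd combination `O(x) = e^{3x/2} - 3e^x - 3e^{x/2} + 6x + 3e^{-x/2} + 3e^{-x} - e^{-3x/2}`,
which is `e^{-x}` times the (negated) numerator of `h`. -/
noncomputable def OOfun (x : ℝ) : ℝ :=
  Real.exp ((3/2) * x) - 3 * Real.exp (1 * x) - 3 * Real.exp ((1/2) * x) + 6 * x
    + 3 * Real.exp ((-1/2) * x) + 3 * Real.exp ((-1) * x) - Real.exp ((-3/2) * x)

noncomputable def OOfun1 (x : ℝ) : ℝ :=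
  ((3/2) * Real.exp ((3/2) * x) - 3 * Real.exp (1 * x) - (3/2) * Real.exp ((1/2) * x)
    - (3/2) * Real.exp ((-1/2) * x) - 3 * Real.exp ((-1) * x)
    + (3/2) * Real.exp ((-3/2) * x)) + 6

noncomputable def OOfun2 (x : ℝ) : ℝ :=
  (9/4) * Real.exp ((3/2) * x) - 3 * Real.exp (1 * x) - (3/4) * Real.exp ((1/2) * x)
    + (3/4) * Real.exp ((-1/2) * x) + 3 * Real.exp ((-1) * x) - (9/4) * Real.exp ((-3/2) * x)

noncomputable def OOfun3 (x : ℝ) : ℝ :=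
  (27/8) * Real.exp ((3/2) * x) - 3 * Real.exp (1 * x) - (3/8) * Real.exp ((1/2) * x)
    - (3/8) * Real.exp ((-1/2) * x) - 3 * Real.exp ((-1) * x) + (27/8) * Real.exp ((-3/2) * x)

lemma hasDerivAt_exp_mul (a x : ℝ) :
    HasDerivAt (fun x => Real.exp (a * x)) (a * Real.exp (a * x)) x := by
  exact HasDerivAt.congr_deriv ((Real.hasDerivAt_exp (a * x)).comp x ((hasDerivAt_id x).const_mul a)) (by ring)

lemma hasDerivAt_OOfun (x : ℝ) : HasDerivAt OOfun (OOfun1 x) x := by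
  have h := fun a : ℝ => hasDerivAt_exp_mul a x
  have H := ((((((h (3/2)).sub ((h 1).const_mul 3)).sub ((h (1/2)).const_mul 3)).add
      ((hasDerivAt_id x).const_mul 6)).add ((h (-1/2)).const_mul 3)).add
      ((h (-1)).const_mul 3)).sub (h (-3/2))
  refine HasDerivAt.congr_deriv H ?_
  unfold OOfun1; ring

lemma hasDerivAt_OOfun1 (x : ℝ) : HasDerivAt OOfun1 (OOfun2 x) x := by
  have h := fun a : ℝ => hasDerivAt_exp_mul a x
  have H := ((((((h (3/2)).const_mul (3/2)).sub ((h 1).const_mul 3)).sub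
      ((h (1/2)).const_mul (3/2))).sub ((h (-1/2)).const_mul (3/2))).sub
      ((h (-1)).const_mul 3)).add ((h (-3/2)).const_mul (3/2))
  have H2 := H.add_const 6
  refine HasDerivAt.congr_deriv H2 ?_
  unfold OOfun2; ring

lemma hasDerivAt_OOfun2 (x : ℝ) : HasDerivAt OOfun2 (OOfun3 x) x := by
  have h := fun a : ℝ => hasDerivAt_exp_mul a x
  have H := ((((((h (3/2)).const_mul (9/4)).sub ((h 1).const_mul 3)).sub
      ((h (1/2)).const_mul (3/4))).add ((h (-1/2)).const_mul (3/4))).add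
      ((h (-1)).const_mul 3)).sub ((h (-3/2)).const_mul (9/4))
  refine HasDerivAt.congr_deriv H ?_
  unfold OOfun3; ring

lemma deriv_OOfun : deriv OOfun = OOfun1 := funext fun x => (hasDerivAt_OOfun x).deriv
lemma deriv_OOfun1 : deriv OOfun1 = OOfun2 := funext fun x => (hasDerivAt_OOfun1 x).deriv
lemma deriv_OOfun2 : deriv OOfun2 = OOfun3 := funext fun x => (hasDerivAt_OOfun2 x).deriv

lemma OOfun_zero : OOfun 0 = 0 := by simp [OOfun]
lemma OOfun1_zero : OOfun1 0 = 0 := by norm_num [OOfun1]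
lemma OOfun2_zero : OOfun2 0 = 0 := by norm_num [OOfun2]
lemma OOfun3_zero : OOfun3 0 = 0 := by norm_num [OOfun3]

lemma analyticAt_OOfun (x : ℝ) : AnalyticAt ℝ OOfun x := by
  have h : ∀ a : ℝ, AnalyticAt ℝ (fun x : ℝ => Real.exp (a * x)) x := fun a =>
    (analyticAt_const.mul analyticAt_id).rexp
  exact ((((((h (3/2)).sub (analyticAt_const.mul (h 1))).sub
    (analyticAt_const.mul (h (1/2)))).add (analyticAt_const.mul analyticAt_id)).add
    (analyticAt_const.mul (h (-1/2)))).add (analyticAt_const.mul (h (-1)))).sub (h (-3/2))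

/-- If the `n`-th iterated derivative at `0` vanishes, the `n`-th power series coefficient
vanishes. -/
lemma coeff_eq_zero_of_iteratedDeriv {f : ℝ → ℝ} {p : FormalMultilinearSeries ℝ ℝ ℝ}
    (hp : HasFPowerSeriesAt f p 0) {n : ℕ} (h : iteratedDeriv n f 0 = 0) : p.coeff n = 0 := by
  obtain ⟨r, hr⟩ := hp
  have h1 := hr.factorial_smul (1 : ℝ) n
  rw [← iteratedDeriv_eq_iteratedFDeriv, h] at h1
  have h2 : (p n fun _ => (1 : ℝ)) = p.coeff n := by
    simp [FormalMultilinearSeries.apply_eq_pow_smul_coeff]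
  rw [h2] at h1
  exact (smul_eq_zero.mp h1).resolve_left (by simp [Nat.factorial_ne_zero])

/-- The function `x * dslope f 0 x = f x` when `f 0 = 0`. -/
lemma mul_dslope_eq {f : ℝ → ℝ} (hf : f 0 = 0) (x : ℝ) : x * dslope f 0 x = f x := by
  simpa [hf, smul_eq_mul] using sub_smul_dslope f 0 x

theorem hCT_extends_analytic' :
    ∃ H : ℝ → ℝ, (∀ x : ℝ, AnalyticAt ℝ H x) ∧
      ∀ x : ℝ, x ≠ 0 →
        H x = -(Real.exp x * OOfun x / x ^ 4) /
          (6 * ((Real.exp (x / 2) - 1) / x) ^ 4 * (Real.exp (x / 2) + 1) ^ 2) := by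
  classical
  obtain ⟨p, hp⟩ := analyticAt_OOfun 0
  set g1 := dslope OOfun 0 with hg1def
  set g2 := dslope g1 0 with hg2def
  set g3 := dslope g2 0 with hg3def
  set g4 := dslope g3 0 with hg4def
  have hp1 : HasFPowerSeriesAt g1 p.fslope 0 := hp.has_fpower_series_dslope_fslope
  have hp2 : HasFPowerSeriesAt g2 p.fslope.fslope 0 := hp1.has_fpower_series_dslope_fslope
  have hp3 : HasFPowerSeriesAt g3 p.fslope.fslope.fslope 0 := hp2.has_fpower_series_dslope_fslope
  have hp4 : HasFPowerSeriesAt g4 p.fslope.fslope.fslope.fslope 0 :=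
    hp3.has_fpower_series_dslope_fslope
  -- coefficients of `p` vanish in degrees 1, 2, 3
  have c1 : p.coeff 1 = 0 := coeff_eq_zero_of_iteratedDeriv hp
    (by rw [iteratedDeriv_one, deriv_OOfun]; exact OOfun1_zero)
  have c2 : p.coeff 2 = 0 := coeff_eq_zero_of_iteratedDeriv hp
    (by rw [show (2 : ℕ) = 1 + 1 from rfl, iteratedDeriv_succ, iteratedDeriv_one,
      deriv_OOfun, deriv_OOfun1]; exact OOfun2_zero)
  have c3 : p.coeff 3 = 0 := coeff_eq_zero_of_iteratedDeriv hp
    (by rw [show (3 : ℕ) = 1 + 1 + 1 from rfl, iteratedDeriv_succ, iteratedDeriv_succ,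
      iteratedDeriv_one, deriv_OOfun, deriv_OOfun1, deriv_OOfun2]; exact OOfun3_zero)
  -- hence the iterated dslopes vanish at 0
  have hg10 : g1 0 = 0 := by
    have h : p.fslope.coeff 0 = g1 0 := hp1.coeff_zero 1
    simp only [FormalMultilinearSeries.coeff_fslope] at h
    rw [← h]; simpa using c1
  have hg20 : g2 0 = 0 := by
    have h : p.fslope.fslope.coeff 0 = g2 0 := hp2.coeff_zero 1
    simp only [FormalMultilinearSeries.coeff_fslope] at h
    rw [← h]; simpa using c2
  have hg30 : g3 0 = 0 := by
    have h : p.fslope.fslope.fslope.coeff 0 = g3 0 := hp3.coeff_zero 1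
    simp only [FormalMultilinearSeries.coeff_fslope] at h
    rw [← h]; simpa using c3
  -- the factorization `OOfun y = y ^ 4 * g4 y`
  have k0 : ∀ y : ℝ, y * g1 y = OOfun y := mul_dslope_eq OOfun_zero
  have k1 : ∀ y : ℝ, y * g2 y = g1 y := mul_dslope_eq hg10
  have k2 : ∀ y : ℝ, y * g3 y = g2 y := mul_dslope_eq hg20
  have k3 : ∀ y : ℝ, y * g4 y = g3 y := mul_dslope_eq hg30
  have key : ∀ y : ℝ, OOfun y = y ^ 4 * g4 y := by
    intro y
    rw [← k0, ← k1, ← k2, ← k3]; ring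
  have g4eq : ∀ y : ℝ, y ≠ 0 → g4 y = OOfun y / y ^ 4 := by
    intro y hy
    rw [key y]
    field_simp
  -- the function `q = dslope (exp (·/2) - 1) 0`
  have heA : ∀ x : ℝ, AnalyticAt ℝ (fun x : ℝ => Real.exp (x / 2) - 1) x := fun x =>
    ((analyticAt_id.div analyticAt_const (by norm_num)).rexp).sub analyticAt_const
  have he0 : Real.exp ((0 : ℝ) / 2) - 1 = 0 := by norm_num
  obtain ⟨pe, hpe⟩ := heA 0
  set q := dslope (fun x : ℝ => Real.exp (x / 2) - 1) 0 with hqdef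
  have hpq : HasFPowerSeriesAt q pe.fslope 0 := hpe.has_fpower_series_dslope_fslope
  have kq : ∀ y : ℝ, y * q y = Real.exp (y / 2) - 1 := mul_dslope_eq he0
  have qeq : ∀ y : ℝ, y ≠ 0 → q y = (Real.exp (y / 2) - 1) / y := by
    intro y hy
    rw [eq_div_iff hy, mul_comm]
    exact kq y
  have q0 : q 0 = 1 / 2 := by
    rw [hqdef, dslope_same]
    have hd : HasDerivAt (fun x : ℝ => Real.exp (x / 2) - 1)
        (Real.exp ((0 : ℝ) / 2) * (1 / 2)) 0 := by
      have h1 : HasDerivAt (fun x : ℝ => x / 2) ((1 : ℝ) / 2) 0 := (hasDerivAt_id 0).div_const 2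
      exact ((Real.hasDerivAt_exp ((0 : ℝ) / 2)).comp 0 h1).sub_const 1
    rw [hd.deriv]
    norm_num
  have qne : ∀ y : ℝ, q y ≠ 0 := by
    intro y
    rcases eq_or_ne y 0 with rfl | hy
    · rw [q0]; norm_num
    · rw [qeq y hy]
      refine div_ne_zero (sub_ne_zero.mpr ?_) hy
      intro h
      exact hy (by simpa using (Real.exp_eq_one_iff (y / 2)).mp h)
  -- analyticity of `g4` and `q` everywhere
  have hg4A : ∀ x : ℝ, AnalyticAt ℝ g4 x := by
    intro x
    rcases eq_or_ne x 0 with rfl | hx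
    · exact hp4.analyticAt
    · refine AnalyticAt.congr
        ((analyticAt_OOfun x).div ((analyticAt_id (𝕜 := ℝ)).pow 4) (pow_ne_zero 4 hx)) ?_
      filter_upwards [isOpen_compl_singleton.mem_nhds hx] with y hy
      exact (g4eq y hy).symm
  have hqA : ∀ x : ℝ, AnalyticAt ℝ q x := by
    intro x
    rcases eq_or_ne x 0 with rfl | hx
    · exact hpq.analyticAt
    · refine AnalyticAt.congr ((heA x).div (analyticAt_id (𝕜 := ℝ)) hx) ?_
      filter_upwards [isOpen_compl_singleton.mem_nhds hx] with y hy
      exact (qeq y hy).symm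
  refine ⟨fun x => -(Real.exp x * g4 x) /
      (6 * q x ^ 4 * (Real.exp (x / 2) + 1) ^ 2), ?_, ?_⟩
  · intro x
    apply AnalyticAt.div
    · exact ((analyticAt_id.rexp).mul (hg4A x)).neg
    · exact (analyticAt_const.mul ((hqA x).pow 4)).mul
        ((((analyticAt_id.div analyticAt_const (by norm_num)).rexp).add analyticAt_const).pow 2)
    · refine mul_ne_zero (mul_ne_zero (by norm_num) (pow_ne_zero 4 (qne x))) ?_
      positivity
  · intro x hx
    simp only [g4eq x hx, qeq x hx]
    ring

/-- The expression of `hCT` in terms of `OOfun`, for `x ≠ 0`. -/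
lemma hCT_eq {x : ℝ} (hx : x ≠ 0) :
    hCT x = -(Real.exp x * OOfun x / x ^ 4) /
      (6 * ((Real.exp (x / 2) - 1) / x) ^ 4 * (Real.exp (x / 2) + 1) ^ 2) := by
  have key : ∀ n : ℕ, Real.exp ((n : ℝ) * (x / 2)) = Real.exp (x / 2) ^ n := fun n =>
    Real.exp_nat_mul _ n
  set t := Real.exp (x / 2) with ht
  have ht0 : 0 < t := Real.exp_pos _
  have e1 : Real.exp x = t ^ 2 := by
    rw [show x = (2 : ℕ) * (x / 2) by push_cast; ring, key]
  have e32 : Real.exp (3 * x / 2) = t ^ 3 := by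
    rw [show 3 * x / 2 = (3 : ℕ) * (x / 2) by push_cast; ring, key]
  have e2 : Real.exp (2 * x) = t ^ 4 := by
    rw [show 2 * x = (4 : ℕ) * (x / 2) by push_cast; ring, key]
  have e52 : Real.exp (5 * x / 2) = t ^ 5 := by
    rw [show 5 * x / 2 = (5 : ℕ) * (x / 2) by push_cast; ring, key]
  have e3 : Real.exp (3 * x) = t ^ 6 := by
    rw [show 3 * x = (6 : ℕ) * (x / 2) by push_cast; ring, key]
  have em12 : Real.exp (-x / 2) = t⁻¹ := by
    rw [show -x / 2 = -(x / 2) by ring, Real.exp_neg]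
  have o32 : Real.exp ((3/2 : ℝ) * x) = t ^ 3 := by
    rw [show (3/2 : ℝ) * x = (3 : ℕ) * (x / 2) by push_cast; ring, key]
  have o1 : Real.exp ((1 : ℝ) * x) = t ^ 2 := by
    rw [show (1 : ℝ) * x = (2 : ℕ) * (x / 2) by push_cast; ring, key]
  have o12 : Real.exp ((1/2 : ℝ) * x) = t := by
    rw [show (1/2 : ℝ) * x = x / 2 by ring]
  have om12 : Real.exp ((-1/2 : ℝ) * x) = t⁻¹ := by
    rw [show (-1/2 : ℝ) * x = -(x / 2) by ring, Real.exp_neg]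
  have om1 : Real.exp ((-1 : ℝ) * x) = (t ^ 2)⁻¹ := by
    rw [show (-1 : ℝ) * x = -((2 : ℕ) * (x / 2)) by push_cast; ring, Real.exp_neg, key]
  have om32 : Real.exp ((-3/2 : ℝ) * x) = (t ^ 3)⁻¹ := by
    rw [show (-3/2 : ℝ) * x = -((3 : ℕ) * (x / 2)) by push_cast; ring, Real.exp_neg, key]
  have ht1 : t - 1 ≠ 0 := by
    rw [sub_ne_zero, ht]
    intro h
    exact hx (by simpa using (Real.exp_eq_one_iff (x / 2)).mp h)
  have ht2 : t + 1 ≠ 0 := by positivity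
  have htne : t ≠ 0 := ne_of_gt ht0
  unfold hCT OOfun
  rw [e1, e32, e2, e52, e3, em12, o32, o1, o12, om12, om1, om32]
  rw [div_eq_div_iff (by positivity) ?h2]
  case h2 =>
    apply mul_ne_zero (mul_ne_zero (by norm_num) _) (by positivity)
    exact pow_ne_zero _ (div_ne_zero ht1 hx)
  field_simp
  ring

/-- The singularity of `h` at `x = 0` is removable: `h` extends to a real-analytic
function on all of `ℝ`. -/
theorem hCT_extends_analytic :
    ∃ H : ℝ → ℝ, (∀ x : ℝ, AnalyticAt ℝ H x) ∧ ∀ x : ℝ, x ≠ 0 → H x = hCT x := by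
  obtain ⟨H, hH, hHeq⟩ := hCT_extends_analytic'
  exact ⟨H, hH, fun x hx => by rw [hHeq x hx, hCT_eq hx]⟩
end
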